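/- There exists an absolute constant C > 0 such that for all z ∈ ℍ and all n with n ≥ max(4, 2|Re z|), |∫_{−n}^{n} (s̃ₓ(z) − z) dx| < C, where s̃ₓ(z) = x + √((z−x)² − 1). -/

import Mathlib

open Complex MeasureTheory Filter intervalIntegral

/-- Complex square root with the branch chosen in the closed upper half-plane. -/
noncomputable def csqrtH (w : ℂ) : ℂ :=
  if 0 ≤ (w ^ (1/2 : ℂ)).im then w ^ (1/2 : ℂ) else -(w ^ (1/2 : ℂ))

/-- The slit map at `x`: `s̃ₓ(z) = x + √((z-x)² - 1)`, branch mapping ℍ into ℍ. -/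
noncomputable def slitAt (x : ℝ) (z : ℂ) : ℂ := x + csqrtH ((z - x) ^ 2 - 1)

/-- The complex derivative of the slit map at `x`: `(z-x)/√((z-x)² - 1)`. -/
noncomputable def slitDerivAt (x : ℝ) (z : ℂ) : ℂ := (z - x) / csqrtH ((z - x) ^ 2 - 1)

lemma csqrtH_im_nonneg (u : ℂ) : 0 ≤ (csqrtH u).im := by
  unfold csqrtH
  split_ifs with h
  · exact h
  · simp only [neg_im]; linarith [not_le.mp h]

lemma csqrtH_sq {u : ℂ} (hu : u ≠ 0) : (csqrtH u) ^ 2 = u := by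
  have h : (u ^ (1/2 : ℂ)) ^ 2 = u := by
    rw [Complex.cpow_def_of_ne_zero hu, ← Complex.exp_nat_mul]
    rw [show (2:ℕ) * (Complex.log u * (1/2)) = Complex.log u by push_cast; ring]
    exact Complex.exp_log hu
  unfold csqrtH
  split_ifs with h'
  · exact h
  · rw [neg_pow]; simp [h]

lemma measurable_csqrtH : Measurable csqrtH := by
  have hm : Measurable fun u : ℂ => u ^ (1/2 : ℂ) := by
    have : (fun u : ℂ => u ^ (1/2:ℂ))
        = fun u => if u = 0 then 0 else Complex.exp (Complex.log u * (1/2)) := by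
      funext u
      by_cases h : u = 0
      · simp [h, Complex.zero_cpow (by norm_num : (1/2:ℂ) ≠ 0)]
      · rw [Complex.cpow_def_of_ne_zero h, if_neg h]
    rw [this]
    exact Measurable.ite (measurableSet_eq) measurable_const
      ((Complex.measurable_log.mul_const _).cexp)
  unfold csqrtH
  exact Measurable.ite (measurableSet_le measurable_const (Complex.measurable_im.comp hm))
    hm hm.neg

lemma u_ne_zero {w : ℂ} (hw : 0 < w.im) : w ^ 2 - 1 ≠ 0 := by
  intro h
  have h2 : (w - 1) * (w + 1) = 0 := by linear_combination h
  rcases mul_eq_zero.mp h2 with h3 | h3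
  · have : w.im = 0 := by
      have := congrArg Complex.im h3; simpa using this
    linarith
  · have : w.im = 0 := by
      have := congrArg Complex.im h3; simpa using this
    linarith

lemma dot_nonneg {w s : ℂ} (hw : 0 < w.im) (him : 0 ≤ s.im) (hsq : s ^ 2 = w ^ 2 - 1) :
    0 ≤ w.re * s.re + w.im * s.im := by
  have key : s.re * s.im = w.re * w.im := by
    have := congrArg Complex.im hsq
    simp only [pow_two, Complex.mul_im, Complex.sub_im, Complex.one_im] at this
    linarith
  rcases eq_or_lt_of_le him with h0 | hpos
  · have hre : w.re = 0 := by
      have h1 : w.re * w.im = 0 := by rw [← key, ← h0]; ring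
      rcases mul_eq_zero.mp h1 with h | h
      · exact h
      · linarith
    rw [hre, ← h0]; simp
  · have h2 : s.im * (w.re * s.re + w.im * s.im) = w.re ^ 2 * w.im + w.im * s.im ^ 2 := by
      linear_combination w.re * key
    have h3 : 0 ≤ s.im * (w.re * s.re + w.im * s.im) := by
      rw [h2]; positivity
    exact nonneg_of_mul_nonneg_right h3 hpos

lemma abs_add_ge {w s : ℂ} (hw : 0 < w.im) (him : 0 ≤ s.im) (hsq : s ^ 2 = w ^ 2 - 1) :
    ‖w‖ ≤ ‖w + s‖ := by
  have hd := dot_nonneg hw him hsq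
  have h1 : Complex.normSq w ≤ Complex.normSq (w + s) := by
    simp only [Complex.normSq_apply, Complex.add_re, Complex.add_im]
    nlinarith [sq_nonneg s.re, sq_nonneg s.im]
  rw [Complex.norm_def, Complex.norm_def]
  exact Real.sqrt_le_sqrt h1

lemma sum_ne_zero' {w s : ℂ} (hw : 0 < w.im) (him : 0 ≤ s.im) : w + s ≠ 0 := by
  intro h
  have := congrArg Complex.im h
  simp only [Complex.add_im, Complex.zero_im] at this
  linarith

lemma sw_eq {w s : ℂ} (hsw : w + s ≠ 0) (hsq : s ^ 2 = w ^ 2 - 1) :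
    s - w = -(w + s)⁻¹ := by
  have e1 : (s - w) * (w + s) = -1 := by linear_combination hsq
  field_simp
  linear_combination e1

lemma norm_sub_le_inv {w s : ℂ} (hw : 0 < w.im) (him : 0 ≤ s.im) (hsq : s ^ 2 = w ^ 2 - 1) :
    ‖s - w‖ ≤ ‖w‖⁻¹ := by
  have hw0 : w ≠ 0 := by
    intro h; rw [h] at hw; simp at hw
  have hwpos : 0 < ‖w‖ := norm_pos_iff.mpr hw0
  rw [sw_eq (sum_ne_zero' hw him) hsq, norm_neg, norm_inv]
  exact inv_anti₀ hwpos (abs_add_ge hw him hsq)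

lemma key2_eq {w s : ℂ} (hw0 : w ≠ 0) (hsw : w + s ≠ 0) (hsq : s ^ 2 = w ^ 2 - 1) :
    s - w + (2*w)⁻¹ = -(2*w*(w+s)^2)⁻¹ := by
  have e2 : (s - w) * (2*w*(w+s)^2) + (w+s)^2 = -1 := by
    linear_combination (2*w*(w+s)+1) * hsq
  have h3 : (2:ℂ)*w*(w+s)^2 ≠ 0 :=
    mul_ne_zero (mul_ne_zero two_ne_zero hw0) (pow_ne_zero _ hsw)
  field_simp
  linear_combination e2

lemma key2_norm {w s : ℂ} (hw : 0 < w.im) (him : 0 ≤ s.im) (hsq : s ^ 2 = w ^ 2 - 1) :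
    ‖s - w + (2*w)⁻¹‖ ≤ (2 * ‖w‖^3)⁻¹ := by
  have hw0 : w ≠ 0 := by intro h; rw [h] at hw; simp at hw
  have hwpos : 0 < ‖w‖ := norm_pos_iff.mpr hw0
  rw [key2_eq hw0 (sum_ne_zero' hw him) hsq, norm_neg, norm_inv]
  have h1 : ‖(2:ℂ)*w*(w+s)^2‖ = 2 * ‖w‖ * ‖w+s‖^2 := by
    rw [norm_mul, norm_mul, norm_pow]
    norm_num
  rw [h1]
  apply inv_anti₀ (by positivity)
  have h2 := abs_add_ge hw him hsq
  nlinarith [mul_self_le_mul_self (norm_nonneg w) h2, hwpos]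

lemma crude_bound {w s : ℂ} (hw : 0 < w.im) (him : 0 ≤ s.im) (hsq : s ^ 2 = w ^ 2 - 1) :
    ‖s - w‖ ≤ 5 := by
  rcases le_or_gt 2 ‖w‖ with h | h
  · have h1 := norm_sub_le_inv hw him hsq
    have h2 : ‖w‖⁻¹ ≤ 2⁻¹ := inv_anti₀ (by norm_num) h
    linarith [h1.trans h2]
  · have hs2 : ‖s‖^2 ≤ ‖w‖^2 + 1 := by
      calc ‖s‖^2 = ‖s^2‖ := (norm_pow s 2).symm
      _ = ‖w^2 - 1‖ := by rw [hsq]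
      _ ≤ ‖w^2‖ + ‖(1:ℂ)‖ := norm_sub_le _ _
      _ = ‖w‖^2 + 1 := by rw [norm_pow, norm_one]
    have hs3 : ‖s‖ ≤ 3 := by nlinarith [norm_nonneg s, norm_nonneg w, sq_nonneg (‖s‖-3)]
    calc ‖s - w‖ ≤ ‖s‖ + ‖w‖ := norm_sub_le _ _
    _ ≤ 5 := by linarith

lemma norm_le_three {u v : ℂ} (h : Complex.normSq u ≤ 9 * Complex.normSq v) : ‖u‖ ≤ 3 * ‖v‖ := by
  have h1 : ‖u‖^2 ≤ (3*‖v‖)^2 := by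
    rw [Complex.normSq_eq_norm_sq, Complex.normSq_eq_norm_sq] at h
    nlinarith [h]
  nlinarith [norm_nonneg u, norm_nonneg v, h1]

lemma log_diff_bound {u v : ℂ} (hu : 0 < u.im) (hv : 0 < v.im)
    (h1 : ‖u‖ ≤ 3 * ‖v‖) (h2 : ‖v‖ ≤ 3 * ‖u‖) :
    ‖Complex.log u - Complex.log v‖ ≤ Real.log 3 + Real.pi := by
  have hu0 : u ≠ 0 := by intro h; rw [h] at hu; simp at hu
  have hv0 : v ≠ 0 := by intro h; rw [h] at hv; simp at hv
  have hupos : 0 < ‖u‖ := norm_pos_iff.mpr hu0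
  have hvpos : 0 < ‖v‖ := norm_pos_iff.mpr hv0
  have hlogd : Complex.log u - Complex.log v =
      ((Real.log ‖u‖ - Real.log ‖v‖ : ℝ) : ℂ)
        + ((u.arg - v.arg : ℝ) : ℂ) * Complex.I := by
    rw [Complex.log, Complex.log]
    push_cast
    ring
  have hdl : |Real.log ‖u‖ - Real.log ‖v‖| ≤ Real.log 3 := by
    rw [abs_le]
    constructor
    · have : Real.log ‖v‖ ≤ Real.log 3 + Real.log ‖u‖ := by
        rw [← Real.log_mul (by norm_num) (ne_of_gt hupos)]
        apply Real.log_le_log (by positivity)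
        simpa using h2
      linarith
    · have : Real.log ‖u‖ ≤ Real.log 3 + Real.log ‖v‖ := by
        rw [← Real.log_mul (by norm_num) (ne_of_gt hvpos)]
        apply Real.log_le_log (by positivity)
        simpa using h1
      linarith
  have hda : |u.arg - v.arg| ≤ Real.pi := by
    rw [abs_le]
    constructor
    · linarith [Complex.arg_le_pi v, Complex.arg_nonneg_iff.mpr hu.le]
    · linarith [Complex.arg_le_pi u, Complex.arg_nonneg_iff.mpr hv.le]
  calc ‖Complex.log u - Complex.log v‖
      ≤ ‖((Real.log ‖u‖ - Real.log ‖v‖ : ℝ) : ℂ)‖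
        + ‖((u.arg - v.arg : ℝ) : ℂ) * Complex.I‖ := by rw [hlogd]; exact norm_add_le _ _
    _ = |Real.log ‖u‖ - Real.log ‖v‖| + |u.arg - v.arg| := by
        rw [norm_mul, Complex.norm_I, mul_one, Complex.norm_real, Complex.norm_real,
          Real.norm_eq_abs, Real.norm_eq_abs]
    _ ≤ Real.log 3 + Real.pi := add_le_add hdl hda

lemma cont_h {z : ℂ} (hz : 0 < z.im) : Continuous fun x : ℝ => (2*(z - x))⁻¹ := by
  apply Continuous.inv₀
  · exact continuous_const.mul (continuous_const.sub Complex.continuous_ofReal)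
  · intro x
    apply mul_ne_zero two_ne_zero
    intro h
    have := congrArg Complex.im h
    simp at this
    linarith

lemma integral_h {z : ℂ} (hz : 0 < z.im) (p q : ℝ) :
    ∫ x in p..q, (2*(z - x))⁻¹ =
      (1/2 : ℂ) * (Complex.log (z - p) - Complex.log (z - q)) := by
  have hderiv : ∀ x ∈ Set.uIcc p q, HasDerivAt (fun y : ℝ => -(1/2 : ℂ) * Complex.log (z - y))
      ((2*(z - x))⁻¹) x := by
    intro x _
    have hmem : (z - (x:ℂ)) ∈ Complex.slitPlane := by
      apply Complex.mem_slitPlane_iff.mpr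
      right
      simp only [Complex.sub_im, Complex.ofReal_im, sub_zero]
      exact ne_of_gt hz
    have h1 : HasDerivAt (fun y : ℂ => -(1/2 : ℂ) * Complex.log (z - y))
        (-(1/2 : ℂ) * ((z - x)⁻¹ * (-1))) (x : ℂ) := by
      exact ((Complex.hasDerivAt_log hmem).comp _ ((hasDerivAt_id ((x:ℝ):ℂ)).const_sub z)).const_mul _
    have h2 := h1.comp_ofReal
    convert h2 using 1
    have hne : (z - (x:ℂ)) ≠ 0 := Complex.slitPlane_ne_zero hmem
    field_simp
  rw [integral_eq_sub_of_hasDerivAt hderiv ((cont_h hz).intervalIntegrable p q)]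
  ring

lemma integral_tail (a : ℝ) {c n : ℝ} (hc : a < c) (hcn : c ≤ n) :
    ∫ x in c..n, (2*(x-a)^3)⁻¹ = (4*(c-a)^2)⁻¹ - (4*(n-a)^2)⁻¹ := by
  have hderiv : ∀ x ∈ Set.uIcc c n, HasDerivAt (fun y : ℝ => -(4*(y-a)^2)⁻¹)
      ((2*(x-a)^3)⁻¹) x := by
    intro x hx
    have hxa : a < x := by
      rcases Set.mem_uIcc.mp hx with ⟨h1, _⟩ | ⟨h1, _⟩
      · linarith
      · linarith
    have h1 : HasDerivAt (fun y : ℝ => 4*(y-a)^2) (4*(2*(x-a))) x := by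
      simpa using (((hasDerivAt_id x).sub_const a).pow 2).const_mul 4
    have h2 : HasDerivAt (fun y : ℝ => -(4*(y-a)^2)⁻¹) (-(-(4*(2*(x-a))) / (4*(x-a)^2)^2)) x :=
      (h1.inv (ne_of_gt (by have := pow_pos (show (0:ℝ) < x - a by linarith) 2; linarith))).neg
    convert h2 using 1
    have : x - a ≠ 0 := by linarith
    field_simp
    ring
  have hcont : ContinuousOn (fun x : ℝ => (2*(x-a)^3)⁻¹) (Set.uIcc c n) := by
    apply ContinuousOn.inv₀
    · fun_prop
    · intro x hx
      have hxa : a < x := by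
        rcases Set.mem_uIcc.mp hx with ⟨h1, _⟩ | ⟨h1, _⟩
        · linarith
        · linarith
      exact ne_of_gt (by have := pow_pos (show (0:ℝ) < x - a by linarith) 3; linarith)
  rw [integral_eq_sub_of_hasDerivAt hderiv (hcont.intervalIntegrable)]
  ring

lemma integral_tail_left (a : ℝ) {c m : ℝ} (hc : c < a) (hcm : m ≤ c) :
    ∫ x in m..c, (2*(a-x)^3)⁻¹ = (4*(a-c)^2)⁻¹ - (4*(a-m)^2)⁻¹ := by
  have hderiv : ∀ x ∈ Set.uIcc m c, HasDerivAt (fun y : ℝ => (4*(a-y)^2)⁻¹)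
      ((2*(a-x)^3)⁻¹) x := by
    intro x hx
    have hxa : x < a := by
      rcases Set.mem_uIcc.mp hx with ⟨_, h1⟩ | ⟨_, h1⟩
      · linarith
      · linarith
    have h1 : HasDerivAt (fun y : ℝ => 4*(a-y)^2) (4*(2*(a-x)*(-1))) x := by
      simpa using (((hasDerivAt_id x).const_sub a).pow 2).const_mul 4
    have h2 : HasDerivAt (fun y : ℝ => (4*(a-y)^2)⁻¹) (-(4*(2*(a-x)*(-1))) / (4*(a-x)^2)^2) x :=
      h1.inv (ne_of_gt (by have := pow_pos (show (0:ℝ) < a - x by linarith) 2; linarith))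
    convert h2 using 1
    have : a - x ≠ 0 := by linarith
    field_simp
    ring
  have hcont : ContinuousOn (fun x : ℝ => (2*(a-x)^3)⁻¹) (Set.uIcc m c) := by
    apply ContinuousOn.inv₀
    · fun_prop
    · intro x hx
      have hxa : x < a := by
        rcases Set.mem_uIcc.mp hx with ⟨_, h1⟩ | ⟨_, h1⟩
        · linarith
        · linarith
      exact ne_of_gt (by have := pow_pos (show (0:ℝ) < a - x by linarith) 3; linarith)
  rw [integral_eq_sub_of_hasDerivAt hderiv (hcont.intervalIntegrable)]

set_option maxHeartbeats 1000000 in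
/-- `|∫_{-n}^{n} (s̃ₓ(z) - z) dx| < C` whenever `n ≥ max(4, 2|Re z|)`. -/
theorem stmt_5 :
    ∃ C > (0:ℝ), ∀ z : ℂ, 0 < z.im → ∀ n : ℝ, max 4 (2 * |z.re|) ≤ n →
      ‖∫ x in (-n)..n, (slitAt x z - z)‖ < C := by
  refine ⟨100, by norm_num, ?_⟩
  intro z hz n hn
  set a := z.re with ha
  have hn4 : (4:ℝ) ≤ n := le_trans (le_max_left _ _) hn
  have hna : 2 * |a| ≤ n := le_trans (le_max_right _ _) hn
  obtain ⟨ha1, ha2⟩ := abs_le.mp (show |a| ≤ n/2 by linarith)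
  -- basic facts about w = z - x
  have hwim : ∀ x : ℝ, 0 < (z - (x:ℂ)).im := by
    intro x
    simp only [Complex.sub_im, Complex.ofReal_im, sub_zero]
    exact hz
  have hsim : ∀ x : ℝ, 0 ≤ (csqrtH ((z-(x:ℂ))^2 - 1)).im := fun x => csqrtH_im_nonneg _
  have hssq : ∀ x : ℝ, (csqrtH ((z-(x:ℂ))^2-1))^2 = (z-(x:ℂ))^2 - 1 :=
    fun x => csqrtH_sq (u_ne_zero (hwim x))
  set F : ℝ → ℂ := fun x => slitAt x z - z with hF
  have hFeq : ∀ x : ℝ, F x = csqrtH ((z-(x:ℂ))^2-1) - (z - x) := by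
    intro x; simp only [hF, slitAt]; ring
  have hFb : ∀ x, ‖F x‖ ≤ 5 := by
    intro x; rw [hFeq]; exact crude_bound (hwim x) (hsim x) (hssq x)
  have hFmeas : Measurable F := by
    have hrw : F = fun x : ℝ => (x:ℂ) + csqrtH ((z-(x:ℂ))^2-1) - z := by
      funext x; simp only [hF, slitAt]
    rw [hrw]
    apply Measurable.sub _ measurable_const
    apply Measurable.add Complex.measurable_ofReal
    apply measurable_csqrtH.comp
    exact Continuous.measurable (by continuity)
  have hFint : ∀ p q : ℝ, IntervalIntegrable F volume p q := by
    intro p q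
    rw [intervalIntegrable_iff]
    have hc : IntegrableOn (fun _ : ℝ => (5:ℝ)) (Set.uIoc p q) volume := by
      exact integrableOn_const (by rw [Set.uIoc]; exact measure_Ioc_lt_top.ne)
    apply hc.mono' hFmeas.aestronglyMeasurable
    filter_upwards with x using hFb x
  set G : ℝ → ℂ := fun x => F x + (2*(z-x))⁻¹ with hG
  have hGint : ∀ p q : ℝ, IntervalIntegrable G volume p q :=
    fun p q => (hFint p q).add ((cont_h hz).intervalIntegrable p q)
  have hGeq : ∀ x : ℝ, G x = csqrtH ((z-(x:ℂ))^2-1) - (z - x) + (2*(z-x))⁻¹ := by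
    intro x; rw [hG]; simp only []; rw [hFeq x]
  -- right tail
  have htailR : ‖∫ x in (a+2)..n, G x‖ ≤ 1/16 := by
    have hb : ∀ᵐ x ∂(volume.restrict (Set.uIoc (a+2) n)), ‖G x‖ ≤ (2*(x-a)^3)⁻¹ := by
      rw [ae_restrict_iff' measurableSet_uIoc]
      filter_upwards with x hx
      rw [Set.uIoc_of_le (by linarith : a+2 ≤ n)] at hx
      have hx1 : a + 2 < x := hx.1
      rw [hGeq x]
      refine le_trans (key2_norm (hwim x) (hsim x) (hssq x)) ?_
      have hre : x - a ≤ ‖z - (x:ℂ)‖ := by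
        have h1 := Complex.abs_re_le_norm (z - x)
        have h2 : (z - (x:ℂ)).re = a - x := by simp [ha]
        rw [h2, _root_.abs_of_nonpos (show a - x ≤ (0:ℝ) by linarith)] at h1
        linarith
      have hx0 : (0:ℝ) < x - a := by linarith
      apply inv_anti₀ (by have := pow_pos hx0 3; linarith)
      have hcube : (x-a)^3 ≤ ‖z - (x:ℂ)‖^3 := pow_le_pow_left₀ hx0.le hre 3
      linarith
    have hboundInt : IntervalIntegrable (fun x => (2*(x-a)^3)⁻¹) volume (a+2) n := by
      apply ContinuousOn.intervalIntegrable
      apply ContinuousOn.inv₀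
      · fun_prop
      · intro x hx
        rw [Set.uIcc_of_le (by linarith : a+2 ≤ n)] at hx
        exact ne_of_gt (by have := pow_pos (show (0:ℝ) < x - a by linarith [hx.1]) 3; linarith)
    refine le_trans (intervalIntegral.norm_integral_le_abs_of_norm_le hb hboundInt) ?_
    rw [integral_tail a (by linarith) (by linarith)]
    have h1 : (0:ℝ) ≤ (4*(n-a)^2)⁻¹ := by positivity
    have h2 : (4*(n-a)^2)⁻¹ ≤ 1/16 := by
      rw [show (1:ℝ)/16 = (16:ℝ)⁻¹ by norm_num]
      apply inv_anti₀ (by norm_num)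
      nlinarith
    rw [show a+2-a = (2:ℝ) by ring]
    have h3 : ((4:ℝ)*2^2)⁻¹ = 1/16 := by norm_num
    rw [h3, abs_le]
    constructor <;> linarith
  -- left tail
  have htailL : ‖∫ x in (-n)..(a-2), G x‖ ≤ 1/16 := by
    have hb : ∀ᵐ x ∂(volume.restrict (Set.uIoc (-n) (a-2))), ‖G x‖ ≤ (2*(a-x)^3)⁻¹ := by
      rw [ae_restrict_iff' measurableSet_uIoc]
      filter_upwards with x hx
      rw [Set.uIoc_of_le (by linarith : -n ≤ a-2)] at hx
      have hx1 : x ≤ a - 2 := hx.2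
      rw [hGeq x]
      refine le_trans (key2_norm (hwim x) (hsim x) (hssq x)) ?_
      have hre : a - x ≤ ‖z - (x:ℂ)‖ := by
        have h1 := Complex.abs_re_le_norm (z - x)
        have h2 : (z - (x:ℂ)).re = a - x := by simp [ha]
        rw [h2, _root_.abs_of_nonneg (show (0:ℝ) ≤ a - x by linarith)] at h1
        linarith
      have hx0 : (0:ℝ) < a - x := by linarith
      apply inv_anti₀ (by have := pow_pos hx0 3; linarith)
      have hcube : (a-x)^3 ≤ ‖z - (x:ℂ)‖^3 := pow_le_pow_left₀ hx0.le hre 3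
      linarith
    have hboundInt : IntervalIntegrable (fun x => (2*(a-x)^3)⁻¹) volume (-n) (a-2) := by
      apply ContinuousOn.intervalIntegrable
      apply ContinuousOn.inv₀
      · fun_prop
      · intro x hx
        rw [Set.uIcc_of_le (by linarith : -n ≤ a-2)] at hx
        exact ne_of_gt (by have := pow_pos (show (0:ℝ) < a - x by linarith [hx.2]) 3; linarith)
    refine le_trans (intervalIntegral.norm_integral_le_abs_of_norm_le hb hboundInt) ?_
    rw [integral_tail_left a (by linarith) (by linarith)]
    have h1 : (0:ℝ) ≤ (4*(a-(-n))^2)⁻¹ := by positivity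
    have h2 : (4*(a-(-n))^2)⁻¹ ≤ 1/16 := by
      rw [show (1:ℝ)/16 = (16:ℝ)⁻¹ by norm_num]
      apply inv_anti₀ (by norm_num)
      nlinarith
    rw [show a-(a-2) = (2:ℝ) by ring]
    have h3 : ((4:ℝ)*2^2)⁻¹ = 1/16 := by norm_num
    rw [h3, abs_le]
    constructor <;> linarith
  -- middle F
  have hmidF : ‖∫ x in (a-2)..(a+2), F x‖ ≤ 20 := by
    refine le_trans (norm_integral_le_of_norm_le_const (fun x _ => hFb x)) ?_
    rw [show a+2-(a-2) = (4:ℝ) by ring]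
    norm_num
  -- log bounds
  have hlog3 : Real.log 3 ≤ 2 := by
    have := Real.log_le_sub_one_of_pos (show (0:ℝ) < 3 by norm_num)
    linarith
  have hpi := Real.pi_le_four
  -- middle h
  have hmidH : ‖∫ x in (a-2)..(a+2), (2*(z - x))⁻¹‖ ≤ 3 := by
    rw [integral_h hz]
    rw [norm_mul, show ‖(1/2:ℂ)‖ = 1/2 by simp]
    have hbd := log_diff_bound (u := z - ((a-2:ℝ):ℂ)) (v := z - ((a+2:ℝ):ℂ))
      (hwim (a-2)) (hwim (a+2)) ?_ ?_
    · calc (1/2:ℝ) * ‖Complex.log (z - ((a-2:ℝ):ℂ)) - Complex.log (z - ((a+2:ℝ):ℂ))‖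
          ≤ (1/2) * (Real.log 3 + Real.pi) := by linarith [hbd]
      _ ≤ 3 := by linarith
    · apply norm_le_three
      simp only [Complex.normSq_apply, Complex.sub_re, Complex.sub_im, Complex.ofReal_re,
        Complex.ofReal_im, sub_zero]
      nlinarith [sq_nonneg z.im]
    · apply norm_le_three
      simp only [Complex.normSq_apply, Complex.sub_re, Complex.sub_im, Complex.ofReal_re,
        Complex.ofReal_im, sub_zero]
      nlinarith [sq_nonneg z.im]
  -- total h
  have htotH : ‖∫ x in (-n)..n, (2*(z - x))⁻¹‖ ≤ 3 := by
    rw [integral_h hz]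
    rw [norm_mul, show ‖(1/2:ℂ)‖ = 1/2 by simp]
    have hbd := log_diff_bound (u := z - ((-n:ℝ):ℂ)) (v := z - ((n:ℝ):ℂ))
      (hwim (-n)) (hwim n) ?_ ?_
    · calc (1/2:ℝ) * ‖Complex.log (z - ((-n:ℝ):ℂ)) - Complex.log (z - ((n:ℝ):ℂ))‖
          ≤ (1/2) * (Real.log 3 + Real.pi) := by linarith [hbd]
      _ ≤ 3 := by linarith
    · apply norm_le_three
      simp only [Complex.normSq_apply, Complex.sub_re, Complex.sub_im, Complex.ofReal_re,
        Complex.ofReal_im, sub_zero]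
      push_cast
      nlinarith [sq_nonneg z.im, mul_nonneg (show (0:ℝ) ≤ 2*n-4*a by linarith) (show (0:ℝ) ≤ 4*n-2*a by linarith)]
    · apply norm_le_three
      simp only [Complex.normSq_apply, Complex.sub_re, Complex.sub_im, Complex.ofReal_re,
        Complex.ofReal_im, sub_zero]
      push_cast
      nlinarith [sq_nonneg z.im, mul_nonneg (show (0:ℝ) ≤ 4*a+2*n by linarith) (show (0:ℝ) ≤ 2*a+4*n by linarith)]
  -- splitting
  have hsplit : ∫ x in (-n)..n, G x =
      (∫ x in (-n)..(a-2), G x) + (∫ x in (a-2)..(a+2), G x) + (∫ x in (a+2)..n, G x) := by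
    rw [integral_add_adjacent_intervals (hGint (-n) (a-2)) (hGint (a-2) (a+2)),
      integral_add_adjacent_intervals (hGint (-n) (a+2)) (hGint (a+2) n)]
  have hmidG : ‖∫ x in (a-2)..(a+2), G x‖ ≤ 23 := by
    have : ∫ x in (a-2)..(a+2), G x =
        (∫ x in (a-2)..(a+2), F x) + ∫ x in (a-2)..(a+2), (2*(z - x))⁻¹ := by
      rw [hG]
      exact integral_add (hFint _ _) ((cont_h hz).intervalIntegrable _ _)
    rw [this]
    calc ‖(∫ x in (a-2)..(a+2), F x) + ∫ x in (a-2)..(a+2), (2*(z - x))⁻¹‖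
        ≤ ‖∫ x in (a-2)..(a+2), F x‖ + ‖∫ x in (a-2)..(a+2), (2*(z - x))⁻¹‖ := norm_add_le _ _
      _ ≤ 23 := by linarith
  have hFGsplit : ∫ x in (-n)..n, F x =
      (∫ x in (-n)..n, G x) - ∫ x in (-n)..n, (2*(z - x))⁻¹ := by
    have : ∫ x in (-n)..n, G x =
        (∫ x in (-n)..n, F x) + ∫ x in (-n)..n, (2*(z - x))⁻¹ := by
      rw [hG]
      exact integral_add (hFint _ _) ((cont_h hz).intervalIntegrable _ _)
    rw [this]; ring
  calc ‖∫ x in (-n)..n, F x‖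
      = ‖(∫ x in (-n)..n, G x) - ∫ x in (-n)..n, (2*(z - x))⁻¹‖ := by rw [hFGsplit]
    _ ≤ ‖∫ x in (-n)..n, G x‖ + ‖∫ x in (-n)..n, (2*(z - x))⁻¹‖ := norm_sub_le _ _
    _ ≤ (‖∫ x in (-n)..(a-2), G x‖ + ‖∫ x in (a-2)..(a+2), G x‖ + ‖∫ x in (a+2)..n, G x‖) + 3 := by
        rw [hsplit]
        have := norm_add_le ((∫ x in (-n)..(a-2), G x) + (∫ x in (a-2)..(a+2), G x))
          (∫ x in (a+2)..n, G x)
        have h2 := norm_add_le (∫ x in (-n)..(a-2), G x) (∫ x in (a-2)..(a+2), G x)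
        linarith
    _ < 100 := by linarith
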